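/- Let S be a d-dimensional simplex in ℝ^d with centroid at the origin, and let u, w ∈ S ∩ ℤ^d with u ≠ w. Then there exists an index k ∈ {1, …, d+1} such that β_S(u)_k − β_S(w)_k ≥ λ₁(S)/(d+1), where β_S(x) denotes the vector of barycentric coordinates of x with respect to the vertices of S and λ₁(S) is the first successive minimum of S. -/

import Mathlib

open MeasureTheory Set Pointwise
open scoped Fin.NatCast Fin.CommRing

/-- Uniqueness of affine (barycentric) coordinates for an affinely independent family. -/
lemma bary_uniq {d : ℕ} (v : Fin (d + 1) → (Fin d → ℝ)) (hv : AffineIndependent ℝ v)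
    (a c : Fin (d + 1) → ℝ) (ha : ∑ i, a i = 1) (hc : ∑ i, c i = 1)
    (h : (∑ i, a i • v i) = (∑ i, c i • v i)) : a = c := by
  have h0 : ∑ i, (a - c) i = 0 := by
    simp only [Pi.sub_apply]
    rw [Finset.sum_sub_distrib, ha, hc, sub_self]
  have h1 : Finset.univ.weightedVSub v (a - c) = 0 := by
    rw [Finset.weightedVSub_eq_linear_combination _ h0]
    simp only [Pi.sub_apply, sub_smul]
    rw [Finset.sum_sub_distrib, h, sub_self]
  have := (affineIndependent_iff_of_fintype ℝ v).mp hv (a - c) h0 h1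
  funext i
  simpa [sub_eq_zero] using this i

/-- If a simplex has centroid (average) zero, the sum of its vertices is zero. -/
lemma sum_vertices_eq_zero {d : ℕ} (v : Fin (d + 1) → (Fin d → ℝ))
    (hv : AffineIndependent ℝ v)
    (hcent : (⨍ x in convexHull ℝ (Set.range v), x) = (0 : Fin d → ℝ)) :
    ∑ i, v i = 0 := by
  set S : Set (Fin d → ℝ) := convexHull ℝ (Set.range v) with hSdef
  have htot : affineSpan ℝ (Set.range v) = ⊤ := by
    rw [hv.affineSpan_eq_top_iff_card_eq_finrank_add_one]
    simp [Module.finrank_pi]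
  let b : AffineBasis (Fin (d + 1)) ℝ (Fin d → ℝ) := ⟨v, hv, htot⟩
  have hbv : ∀ i, b i = v i := fun _ => rfl
  set σ : Equiv.Perm (Fin (d + 1)) := finRotate (d + 1) with hσdef
  -- the affine map sending v i ↦ v (e i)
  let T : Equiv.Perm (Fin (d + 1)) → ((Fin d → ℝ) →ᵃ[ℝ] (Fin d → ℝ)) := fun e =>
    (Finset.univ.affineCombination ℝ (fun i => v (e i))).comp b.coords
  have hsumcoord : ∀ x : Fin d → ℝ, ∑ i, b.coords x i = 1 := fun x => by
    simp only [AffineBasis.coords_apply]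
    exact b.sum_coord_apply_eq_one x
  have hT_apply : ∀ (e : Equiv.Perm (Fin (d + 1))) (x : Fin d → ℝ),
      T e x = ∑ i, b.coord i x • v (e i) := by
    intro e x
    show (Finset.univ.affineCombination ℝ (fun i => v (e i))) (b.coords x) = _
    rw [Finset.affineCombination_eq_linear_combination _ _ _ (hsumcoord x)]
    simp [AffineBasis.coords_apply]
  -- coordinates of T e x
  have hcoord_T : ∀ (e : Equiv.Perm (Fin (d + 1))) (x : Fin d → ℝ) (j : Fin (d + 1)),
      b.coord j (T e x) = b.coord (e.symm j) x := by
    intro e x j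
    have hre : T e x = ∑ j, b.coord (e.symm j) x • v j := by
      rw [hT_apply]
      rw [← Equiv.sum_comp e (fun j => b.coord (e.symm j) x • v j)]
      simp
    have hsum1 : ∑ j, b.coord (e.symm j) x = 1 := by
      rw [← Equiv.sum_comp e (fun j => b.coord (e.symm j) x)]
      simp only [Equiv.symm_apply_apply]
      exact b.sum_coord_apply_eq_one x
    have hco : T e x = Finset.univ.affineCombination ℝ b (fun j => b.coord (e.symm j) x) := by
      rw [Finset.affineCombination_eq_linear_combination _ _ _ hsum1, hre]
      rfl
    rw [hco, AffineBasis.coord_apply_combination_of_mem b (Finset.mem_univ j) hsum1]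
  have hTT' : ∀ x : Fin d → ℝ, T σ.symm (T σ x) = x := by
    intro x
    rw [hT_apply σ.symm (T σ x)]
    have : ∀ j, b.coord j (T σ x) = b.coord (σ.symm j) x := hcoord_T σ x
    calc ∑ j, b.coord j (T σ x) • v (σ.symm j)
        = ∑ j, b.coord (σ.symm j) x • v (σ.symm j) := by
          refine Finset.sum_congr rfl fun j _ => by rw [this j]
      _ = ∑ i, b.coord i x • v i := Equiv.sum_comp σ.symm (fun i => b.coord i x • v i)
      _ = x := by
          simpa only [hbv] using b.linear_combination_coord_eq_self x
  have hinj : Function.Injective (T σ) := Function.LeftInverse.injective hTT'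
  -- linear parts
  set L : (Fin d → ℝ) →ₗ[ℝ] (Fin d → ℝ) := (T σ).linear with hLdef
  have hLinj : Function.Injective L := by
    intro y₁ y₂ hy
    have h1 : ∀ y, T σ y = L y + T σ 0 := by
      intro y
      have := (T σ).map_vadd 0 y
      simpa [vadd_eq_add] using this
    have : T σ y₁ = T σ y₂ := by rw [h1 y₁, h1 y₂, hy]
    exact hinj this
  have hLbij : Function.Bijective L :=
    ⟨hLinj, (LinearMap.injective_iff_surjective).mp hLinj⟩
  have hdetL : LinearMap.det L ≠ 0 := by
    have := LinearEquiv.isUnit_det' (LinearEquiv.ofBijective L hLbij)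
    simpa [show ((LinearEquiv.ofBijective L hLbij : (Fin d → ℝ) ≃ₗ[ℝ] (Fin d → ℝ)) :
      (Fin d → ℝ) →ₗ[ℝ] (Fin d → ℝ)) = L from LinearMap.ext fun x => rfl] using this.ne_zero
  set Lc : (Fin d → ℝ) →L[ℝ] (Fin d → ℝ) := LinearMap.toContinuousLinearMap L with hLcdef
  have hLcdet : Lc.det = LinearMap.det L := rfl
  -- measure-theoretic facts
  have hScompact : IsCompact S := (Set.finite_range v).isCompact_convexHull (𝕜 := ℝ)
  have hSmeas : MeasurableSet S := hScompact.isClosed.measurableSet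
  have hSvolpos : 0 < volume S := by
    obtain ⟨x, hx⟩ := interior_convexHull_nonempty_iff_affineSpan_eq_top.mpr htot
    calc (0 : ENNReal) < volume (interior S) :=
          isOpen_interior.measure_pos volume ⟨x, hx⟩
      _ ≤ volume S := measure_mono interior_subset
  have hSvollt : volume S < ⊤ := hScompact.measure_lt_top
  have htoRne : (volume S).toReal ≠ 0 :=
    (ENNReal.toReal_pos hSvolpos.ne' hSvollt.ne).ne'
  have hint0 : ∫ x in S, x = (0 : Fin d → ℝ) := by
    have := hcent
    rw [setAverage_eq] at this
    rcases smul_eq_zero.mp this with h | h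
    · exact absurd (inv_eq_zero.mp h) htoRne
    · exact h
  -- T σ maps S onto S
  have hTv : ∀ i, T σ (v i) = v (σ i) := by
    intro i
    rw [hT_apply]
    have : ∀ j, b.coord j (v i) = if j = i then 1 else 0 := by
      intro j
      rw [← hbv i, AffineBasis.coord_apply]
    rw [Finset.sum_congr rfl fun j _ => by rw [this j]]
    simp
  have hTS : (T σ) '' S = S := by
    rw [hSdef, AffineMap.image_convexHull]
    congr 1
    rw [← Set.range_comp]
    have : (⇑(T σ)) ∘ v = v ∘ σ := funext fun i => hTv i
    rw [this, Set.range_comp]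
    simp [Set.image_univ, σ.surjective.range_eq]
  -- change of variables
  have hTlin : ∀ x, T σ x = L x + T σ 0 := by
    intro x
    have := (T σ).map_vadd 0 x
    simpa [vadd_eq_add] using this
  have hderiv : ∀ x ∈ S, HasFDerivWithinAt (T σ) Lc S x := by
    intro x _
    have h1 : HasFDerivAt (fun y => Lc y + T σ 0) Lc x := (Lc.hasFDerivAt).add_const _
    have h2 : (fun y => Lc y + T σ 0) = ⇑(T σ) := by
      funext y
      rw [hTlin y]
      rfl
    rw [h2] at h1
    exact h1.hasFDerivWithinAt
  have hcov := integral_image_eq_integral_abs_det_fderiv_smul volume hSmeas hderiv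
    (hinj.injOn) (fun y => y)
  rw [hTS, hint0] at hcov
  have hintT : ∫ x in S, T σ x = (0 : Fin d → ℝ) := by
    have habs : |Lc.det| ≠ 0 := by
      rw [hLcdet]; exact abs_ne_zero.mpr hdetL
    have : (0 : Fin d → ℝ) = |Lc.det| • ∫ x in S, T σ x := by
      rw [← integral_smul]; exact hcov
    rcases smul_eq_zero.mp this.symm with h | h
    · exact absurd h habs
    · exact h
  -- compute the integral of T σ over S
  have hintx : IntegrableOn (fun x : Fin d → ℝ => x) S volume :=
    (continuous_id.continuousOn).integrableOn_compact hScompact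
  have hintLx : IntegrableOn (fun x : Fin d → ℝ => Lc x) S volume :=
    (Lc.continuous.continuousOn).integrableOn_compact hScompact
  have hT0 : T σ 0 = 0 := by
    have h1 : ∫ x in S, T σ x = (∫ x in S, Lc x) + (volume S).toReal • (T σ 0) := by
      calc ∫ x in S, T σ x = ∫ x in S, (Lc x + T σ 0) := by
            refine integral_congr_ae (Filter.Eventually.of_forall fun x => ?_)
            rw [hTlin x]; rfl
        _ = (∫ x in S, Lc x) + ∫ (_ : Fin d → ℝ) in S, T σ 0 :=
            integral_add hintLx (integrableOn_const hSvollt.ne)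
        _ = (∫ x in S, Lc x) + (volume S).toReal • (T σ 0) := by
            rw [setIntegral_const]; rfl
    have h2 : ∫ x in S, Lc x = Lc (∫ x in S, x) := Lc.integral_comp_comm hintx
    rw [hintT, h2, hint0] at h1
    simp only [map_zero, zero_add] at h1
    rcases smul_eq_zero.mp h1.symm with h | h
    · exact absurd h htoRne
    · exact h
  -- barycentric coordinates of 0 are invariant under the rotation
  set a : Fin (d + 1) → ℝ := fun i => b.coord i 0 with hadef
  have hasum : ∑ i, a i = 1 := b.sum_coord_apply_eq_one 0
  have hacomb : ∑ i, a i • v i = 0 := by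
    simpa only [hbv] using b.linear_combination_coord_eq_self (0 : Fin d → ℝ)
  have hrot : (fun j => a (σ.symm j)) = a := by
    have h1 : ∑ j, a (σ.symm j) • v j = 0 := by
      have : ∑ i, a i • v (σ i) = 0 := by rw [← hT_apply σ 0, hT0]
      rw [← this, ← Equiv.sum_comp σ (fun j => a (σ.symm j) • v j)]
      simp
    have h2 : ∑ j, a (σ.symm j) = 1 := by
      rw [← Equiv.sum_comp σ (fun j => a (σ.symm j))]
      simpa using hasum
    exact bary_uniq v hv _ a h2 hasum (by rw [h1, hacomb])
  have hstep : ∀ i : Fin (d + 1), a (i + 1) = a i := by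
    intro i
    have h := congrFun hrot (σ i)
    simp only [Equiv.symm_apply_apply] at h
    have hσi : σ i = i + 1 := finRotate_succ_apply i
    rw [h, hσi]
  have hnat : ∀ k : ℕ, a (k : Fin (d + 1)) = a 0 := by
    intro k
    induction k with
    | zero => simp
    | succ n ih =>
        have hc : ((n + 1 : ℕ) : Fin (d + 1)) = ((n : ℕ) : Fin (d + 1)) + 1 := by
          push_cast; ring
        rw [hc, hstep, ih]
  have hconst : ∀ i, a i = a 0 := by
    intro i
    conv_lhs => rw [← Fin.cast_val_eq_self i]
    exact hnat i
  have ha0 : a 0 = ((d : ℝ) + 1)⁻¹ := by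
    have : ∑ i, a i = ((d : ℝ) + 1) * a 0 := by
      rw [Finset.sum_congr rfl fun i _ => hconst i, Finset.sum_const, Finset.card_univ,
        Fintype.card_fin, nsmul_eq_mul]
      push_cast; ring
    rw [hasum] at this
    field_simp at this ⊢
    linarith
  have ha0ne : a 0 ≠ 0 := by
    rw [ha0]
    positivity
  have : (0 : Fin d → ℝ) = a 0 • ∑ i, v i := by
    rw [Finset.smul_sum, ← hacomb]
    exact Finset.sum_congr rfl fun i _ => by rw [hconst i]
  rcases smul_eq_zero.mp this.symm with h | h
  · exact absurd h ha0ne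
  · exact h

/-- **Lemma (barycentric inequality).** Let `S ⊆ ℝ^d` be a `d`-simplex with vertices
`v₁, …, v_{d+1}`, centroid at the origin and first successive minimum `λ₁`. Let `β`
assign to each point its (affine) barycentric coordinates with respect to `v`. If
`u, w ∈ S ∩ ℤ^d` are distinct, then `β(u)_k - β(w)_k ≥ λ₁/(d+1)` for some index `k`. -/
theorem barycentric_coordinate_gap (d : ℕ) (v : Fin (d + 1) → (Fin d → ℝ))
    (hv : AffineIndependent ℝ v) (S : Set (Fin d → ℝ))
    (hS : S = convexHull ℝ (Set.range v))
    (hcent : (⨍ x in S, x) = (0 : Fin d → ℝ))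
    (l1 : ℝ)
    (hl1 : IsLeast {l : ℝ | 0 < l ∧ ∃ z : Fin d → ℤ,
      (fun i => (z i : ℝ)) ≠ 0 ∧ (fun i => (z i : ℝ)) ∈ l • S} l1)
    (β : (Fin d → ℝ) → (Fin (d + 1) → ℝ))
    (hβ : ∀ x : Fin d → ℝ, (∑ i, β x i = 1) ∧ (∑ i, β x i • v i = x))
    (u w : Fin d → ℤ)
    (hu : (fun i => (u i : ℝ)) ∈ S) (hw : (fun i => (w i : ℝ)) ∈ S)
    (huw : u ≠ w) :
    ∃ k : Fin (d + 1),
      l1 / ((d : ℝ) + 1) ≤ β (fun i => (u i : ℝ)) k - β (fun i => (w i : ℝ)) k := by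
  have hsumv : ∑ i, v i = 0 := sum_vertices_eq_zero v hv (by rw [← hS]; exact hcent)
  set u' : Fin d → ℝ := fun i => (u i : ℝ) with hu'def
  set w' : Fin d → ℝ := fun i => (w i : ℝ) with hw'def
  set δ : Fin (d + 1) → ℝ := fun k => β u' k - β w' k with hδdef
  have hδsum : ∑ k, δ k = 0 := by
    rw [hδdef]
    rw [Finset.sum_sub_distrib, (hβ u').1, (hβ w').1, sub_self]
  have hδne : δ ≠ 0 := by
    intro h
    have hβeq : β u' = β w' := by
      funext k
      have := congrFun h k
      simpa [hδdef, sub_eq_zero] using this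
    have : u' = w' := by
      rw [← (hβ u').2, ← (hβ w').2, hβeq]
    apply huw
    funext i
    have h2 : ((u i : ℤ) : ℝ) = ((w i : ℤ) : ℝ) := congrFun this i
    exact_mod_cast h2
  -- maximal coordinate gap
  obtain ⟨k, -, hk⟩ := Finset.exists_mem_eq_sup' (s := Finset.univ)
    ⟨0, Finset.mem_univ 0⟩ δ
  set m : ℝ := Finset.univ.sup' ⟨0, Finset.mem_univ 0⟩ δ with hmdef
  have hle : ∀ j, δ j ≤ m := fun j => Finset.le_sup' δ (Finset.mem_univ j)
  have hmpos : 0 < m := by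
    by_contra h
    push_neg at h
    have hall : ∀ j ∈ Finset.univ, δ j ≤ 0 := fun j _ => le_trans (hle j) h
    have := (Finset.sum_eq_zero_iff_of_nonpos hall).mp hδsum
    apply hδne
    funext j
    exact this j (Finset.mem_univ j)
  set l : ℝ := ((d : ℝ) + 1) * m with hldef
  have hdpos : (0 : ℝ) < (d : ℝ) + 1 := by positivity
  have hlpos : 0 < l := mul_pos hdpos hmpos
  -- the point (w - u) lies in l • S
  have hδcomb : ∑ j, δ j • v j = u' - w' := by
    simp only [hδdef, sub_smul]
    rw [Finset.sum_sub_distrib, (hβ u').2, (hβ w').2]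
  have hwsum : ∑ j, (m - δ j) • v j = w' - u' := by
    simp only [sub_smul]
    rw [Finset.sum_sub_distrib, hδcomb, ← Finset.smul_sum, hsumv, smul_zero, zero_sub,
      neg_sub]
  have hwtsum : ∑ j, (m - δ j) = l := by
    rw [Finset.sum_sub_distrib, hδsum, sub_zero, Finset.sum_const, Finset.card_univ,
      Fintype.card_fin, nsmul_eq_mul, hldef]
    push_cast; ring
  have hmem : w' - u' ∈ l • S := by
    set p : Fin d → ℝ := ∑ j, ((m - δ j) / l) • v j with hpdef
    have hwnn : ∀ j ∈ Finset.univ, 0 ≤ (m - δ j) / l := fun j _ =>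
      div_nonneg (sub_nonneg.mpr (hle j)) hlpos.le
    have hwsum1 : ∑ j, (m - δ j) / l = 1 := by
      rw [← Finset.sum_div, hwtsum, div_self hlpos.ne']
    have hpS : p ∈ S := by
      rw [hS]
      have := Finset.centerMass_mem_convexHull (Finset.univ) hwnn
        (by rw [hwsum1]; norm_num) (fun j _ => Set.mem_range_self (f := v) j)
      rwa [Finset.centerMass_eq_of_sum_1 _ _ hwsum1] at this
    have hlp : l • p = w' - u' := by
      rw [hpdef, Finset.smul_sum, ← hwsum]
      refine Finset.sum_congr rfl fun j _ => ?_
      rw [smul_smul, mul_div_cancel₀ _ hlpos.ne']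
    rw [← hlp]
    exact Set.smul_mem_smul_set hpS
  have hzne : (fun i => (((w - u) i : ℤ) : ℝ)) ≠ 0 := by
    intro h
    apply huw
    funext i
    have := congrFun h i
    simp only [Pi.sub_apply, Int.cast_sub, Pi.zero_apply, sub_eq_zero] at this
    exact_mod_cast this.symm
  have hmeml : l ∈ {l : ℝ | 0 < l ∧ ∃ z : Fin d → ℤ,
      (fun i => (z i : ℝ)) ≠ 0 ∧ (fun i => (z i : ℝ)) ∈ l • S} := by
    refine ⟨hlpos, w - u, hzne, ?_⟩
    have : (fun i => (((w - u) i : ℤ) : ℝ)) = w' - u' := by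
      funext i
      simp [hw'def, hu'def]
    rwa [this]
  have hl1l : l1 ≤ l := hl1.2 hmeml
  refine ⟨k, ?_⟩
  have : l1 / ((d : ℝ) + 1) ≤ m := by
    rw [div_le_iff₀ hdpos]
    calc l1 ≤ l := hl1l
      _ = m * ((d : ℝ) + 1) := by rw [hldef]; ring
  calc l1 / ((d : ℝ) + 1) ≤ m := this
    _ = δ k := hk
    _ = β u' k - β w' k := rfl
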